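/- arXiv:2505.22070 — 2 statements merged into one kernel-verified Lean document; each statement's English description precedes it below -/
import Mathlib

section
/- In the setting of the previous coupled ODE system, if q(t₀) = 0, then the solution component p satisfies the memory equation p'(t) = A(t) p(t) + ∫_{t₀}^t K(t,t') p(t') dt' where K(t,t') = B(t) Γ(t,t') C(t'); conversely any solution of this memory equation with p(t₀) = p₀ arises as the p-component of a solution to the coupled system with q(t₀) = 0. -/
open intervalIntegral
set_option synthInstance.maxHeartbeats 1000000
set_option maxHeartbeats 1000000
set_option linter.unusedSectionVars false

section Aux

variable {Vq : Type*}
    [NormedAddCommGroup Vq] [NormedSpace ℝ Vq] [FiniteDimensional ℝ Vq]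
    (D : ℝ → Vq →L[ℝ] Vq)
    (Γ : ℝ → ℝ → Vq →L[ℝ] Vq)

/-- `Γ t s` as a unit of the ring of endomorphisms. -/
noncomputable def ΓU (hΓinit : ∀ s, Γ s s = 1)
    (hΓcocycle : ∀ t t' t₀, (Γ t t').comp (Γ t' t₀) = Γ t t₀) (t s : ℝ) :
    (Vq →L[ℝ] Vq)ˣ where
  val := Γ t s
  inv := Γ s t
  val_inv := by rw [ContinuousLinearMap.mul_def, hΓcocycle, hΓinit]
  inv_val := by rw [ContinuousLinearMap.mul_def, hΓcocycle, hΓinit]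

theorem Γ_inverse (hΓinit : ∀ s, Γ s s = 1)
    (hΓcocycle : ∀ t t' t₀, (Γ t t').comp (Γ t' t₀) = Γ t t₀) (t s : ℝ) :
    Ring.inverse (Γ t s) = Γ s t :=
  Ring.inverse_unit (ΓU Γ hΓinit hΓcocycle t s)

theorem Γ_cancel (hΓinit : ∀ s, Γ s s = 1)
    (hΓcocycle : ∀ t t' t₀, (Γ t t').comp (Γ t' t₀) = Γ t t₀) (t s : ℝ) (v : Vq) :
    Γ t s (Γ s t v) = v := by
  rw [← ContinuousLinearMap.comp_apply, hΓcocycle, hΓinit, ContinuousLinearMap.one_apply]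

theorem Γ_deriv_snd
    (hΓderiv : ∀ s t, HasDerivAt (fun u => Γ u s) ((D t).comp (Γ t s)) t)
    (hΓinit : ∀ s, Γ s s = 1)
    (hΓcocycle : ∀ t t' t₀, (Γ t t').comp (Γ t' t₀) = Γ t t₀) (t₀ t : ℝ) :
    HasDerivAt (fun s => Γ t₀ s) (-((Γ t₀ t).comp (D t))) t := by
  have h1 : HasFDerivAt (Ring.inverse : (Vq →L[ℝ] Vq) → _)
      (-(ContinuousLinearMap.mulLeftRight ℝ _ (Γ t₀ t) (Γ t₀ t))) (Γ t t₀) :=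
    hasFDerivAt_ringInverse (𝕜 := ℝ) (ΓU Γ hΓinit hΓcocycle t t₀)
  have h2 := h1.comp_hasDerivAt t (hΓderiv t₀ t)
  have h3 : HasDerivAt (fun s => Γ t₀ s)
      (-(Γ t₀ t * ((D t).comp (Γ t t₀)) * Γ t₀ t)) t := by
    have heq : (fun s => Γ t₀ s)
        = Ring.inverse ∘ (fun u : ℝ => Γ u t₀) := funext fun s => by
      simp [Function.comp, Γ_inverse Γ hΓinit hΓcocycle]
    rw [heq]
    convert h2 using 1
    · rfl
    · rfl
    · rfl
    · simp [ContinuousLinearMap.mulLeftRight_apply]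

  convert h3 using 1
  ext v
  have hv : Γ t t₀ (Γ t₀ t v) = v := Γ_cancel Γ hΓinit hΓcocycle t t₀ v
  simp [ContinuousLinearMap.mul_apply, hv]

theorem Γ_cont_snd
    (hΓderiv : ∀ s t, HasDerivAt (fun u => Γ u s) ((D t).comp (Γ t s)) t)
    (hΓinit : ∀ s, Γ s s = 1)
    (hΓcocycle : ∀ t t' t₀, (Γ t t').comp (Γ t' t₀) = Γ t t₀) (t₀ : ℝ) :
    Continuous (fun s => Γ t₀ s) :=
  continuous_iff_continuousAt.mpr fun t =>
    (Γ_deriv_snd D Γ hΓderiv hΓinit hΓcocycle t₀ t).continuousAt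

/-- Key lemma: the candidate `q` solves `q' = Cp + Dq`. -/
theorem memory_q_deriv {Vp : Type*}
    [NormedAddCommGroup Vp] [NormedSpace ℝ Vp] [FiniteDimensional ℝ Vp]
    (C : ℝ → Vp →L[ℝ] Vq) (hC : Continuous C)
    (hΓderiv : ∀ s t, HasDerivAt (fun u => Γ u s) ((D t).comp (Γ t s)) t)
    (hΓinit : ∀ s, Γ s s = 1)
    (hΓcocycle : ∀ t t' t₀, (Γ t t').comp (Γ t' t₀) = Γ t t₀)
    (t₀ : ℝ) (p : ℝ → Vp) (hp : Continuous p) (t : ℝ) :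
    HasDerivAt (fun u => ∫ t' in t₀..u, Γ u t' (C t' (p t')))
      (C t (p t) + D t (∫ t' in t₀..t, Γ t t' (C t' (p t')))) t := by
  have hgcont : Continuous fun t' => Γ t₀ t' (C t' (p t')) :=
    (Γ_cont_snd D Γ hΓderiv hΓinit hΓcocycle t₀).clm_apply (hC.clm_apply hp)
  have hkey : ∀ u, (∫ t' in t₀..u, Γ u t' (C t' (p t')))
      = Γ u t₀ (∫ t' in t₀..u, Γ t₀ t' (C t' (p t'))) := by
    intro u
    rw [← ContinuousLinearMap.intervalIntegral_comp_comm _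
      (hgcont.intervalIntegrable _ _)]
    apply intervalIntegral.integral_congr
    intro t' _
    show Γ u t' (C t' (p t')) = Γ u t₀ (Γ t₀ t' (C t' (p t')))
    rw [← ContinuousLinearMap.comp_apply (Γ u t₀), hΓcocycle]
  have hF : HasDerivAt (fun u => ∫ t' in t₀..u, Γ t₀ t' (C t' (p t')))
      (Γ t₀ t (C t (p t))) t :=
    integral_hasDerivAt_right (hgcont.intervalIntegrable _ _)
      (hgcont.stronglyMeasurableAtFilter _ _) hgcont.continuousAt
  have hG : HasDerivAt (fun u => Γ u t₀) ((D t).comp (Γ t t₀)) t := hΓderiv t₀ t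
  have hQ := hG.clm_apply hF
  have hfun : (fun u => ∫ t' in t₀..u, Γ u t' (C t' (p t')))
      = fun u => Γ u t₀ (∫ t' in t₀..u, Γ t₀ t' (C t' (p t'))) := funext hkey
  rw [hfun, hkey t]
  convert hQ using 1
  rw [Γ_cancel Γ hΓinit hΓcocycle t t₀, ContinuousLinearMap.comp_apply, add_comm]

/-- Uniqueness for the homogeneous equation `δ' = Dδ`, `δ t₀ = 0`. -/
theorem homog_unique
    (hΓderiv : ∀ s t, HasDerivAt (fun u => Γ u s) ((D t).comp (Γ t s)) t)
    (hΓinit : ∀ s, Γ s s = 1)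
    (hΓcocycle : ∀ t t' t₀, (Γ t t').comp (Γ t' t₀) = Γ t t₀)
    (t₀ : ℝ) (δ : ℝ → Vq) (hδ : ∀ t, HasDerivAt δ (D t (δ t)) t)
    (h0 : δ t₀ = 0) : ∀ t, δ t = 0 := by
  have hh : ∀ t, HasDerivAt (fun u => Γ t₀ u (δ u)) 0 t := by
    intro t
    have h := (Γ_deriv_snd D Γ hΓderiv hΓinit hΓcocycle t₀ t).clm_apply (hδ t)
    simpa using h
  have hconst : ∀ t, Γ t₀ t (δ t) = Γ t₀ t₀ (δ t₀) := fun t =>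
    is_const_of_deriv_eq_zero (fun u => (hh u).differentiableAt)
      (fun u => (hh u).deriv) t t₀
  intro t
  have h1 : Γ t₀ t (δ t) = 0 := by rw [hconst t, h0, map_zero]
  have h2 : Γ t t₀ (Γ t₀ t (δ t)) = δ t := Γ_cancel Γ hΓinit hΓcocycle t t₀ (δ t)
  rw [← h2, h1, map_zero]

end Aux

/-- Memory equation: with `q(t₀) = 0`, the `p`-component of the coupled system
`p' = Ap + Bq`, `q' = Cp + Dq` satisfies
`p'(t) = A(t) p(t) + ∫_{t₀}^t K(t,t') p(t') dt'` with `K(t,t') = B(t) Γ(t,t') C(t')`;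
conversely, any solution of the memory equation with `p(t₀) = p₀` arises as the
`p`-component of a solution of the coupled system with `q(t₀) = 0`. -/
theorem memory_equation_equiv {Vp Vq : Type*}
    [NormedAddCommGroup Vp] [NormedSpace ℝ Vp] [FiniteDimensional ℝ Vp]
    [NormedAddCommGroup Vq] [NormedSpace ℝ Vq] [FiniteDimensional ℝ Vq]
    (A : ℝ → Vp →L[ℝ] Vp) (B : ℝ → Vq →L[ℝ] Vp)
    (C : ℝ → Vp →L[ℝ] Vq) (D : ℝ → Vq →L[ℝ] Vq)
    (hA : Continuous A) (hB : Continuous B) (hC : Continuous C) (hD : Continuous D)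
    (Γ : ℝ → ℝ → Vq →L[ℝ] Vq)
    (hΓderiv : ∀ s t, HasDerivAt (fun u => Γ u s) ((D t).comp (Γ t s)) t)
    (hΓinit : ∀ s, Γ s s = 1)
    (hΓcocycle : ∀ t t' t₀, (Γ t t').comp (Γ t' t₀) = Γ t t₀)
    (t₀ : ℝ) :
    (∀ (p : ℝ → Vp) (q : ℝ → Vq),
      (∀ t, HasDerivAt p (A t (p t) + B t (q t)) t) →
      (∀ t, HasDerivAt q (C t (p t) + D t (q t)) t) →
      q t₀ = 0 →
      ∀ t, HasDerivAt p (A t (p t) + ∫ t' in t₀..t, B t (Γ t t' (C t' (p t')))) t) ∧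
    (∀ (p₀ : Vp) (p : ℝ → Vp), p t₀ = p₀ →
      (∀ t, HasDerivAt p (A t (p t) + ∫ t' in t₀..t, B t (Γ t t' (C t' (p t')))) t) →
      ∃ q : ℝ → Vq, q t₀ = 0 ∧
        (∀ t, HasDerivAt p (A t (p t) + B t (q t)) t) ∧
        (∀ t, HasDerivAt q (C t (p t) + D t (q t)) t)) := by
  have hBpull : ∀ (p : ℝ → Vp), Continuous p → ∀ t,
      (∫ t' in t₀..t, B t (Γ t t' (C t' (p t'))))
        = B t (∫ t' in t₀..t, Γ t t' (C t' (p t'))) := by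
    intro p hp t
    exact ContinuousLinearMap.intervalIntegral_comp_comm _
      (((Γ_cont_snd D Γ hΓderiv hΓinit hΓcocycle t).clm_apply
        (hC.clm_apply hp)).intervalIntegrable _ _)
  constructor
  · intro p q hp hq hq0 t
    have hpc : Continuous p :=
      continuous_iff_continuousAt.mpr fun u => (hp u).continuousAt
    have hq'deriv := memory_q_deriv D Γ C hC hΓderiv hΓinit hΓcocycle t₀ p hpc
    have hδ : ∀ u, q u - (∫ t' in t₀..u, Γ u t' (C t' (p t'))) = 0 := by
      apply homog_unique D Γ hΓderiv hΓinit hΓcocycle t₀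
      · intro u
        have h := (hq u).sub (hq'deriv u)
        convert h using 1
        · rfl
        simp only [map_sub]
        abel
      · simp [hq0, integral_same]
    have hqq : q t = ∫ t' in t₀..t, Γ t t' (C t' (p t')) := by
      have h := hδ t; rwa [sub_eq_zero] at h
    rw [hBpull p hpc t, ← hqq]
    exact hp t
  · intro p₀ p hp0 hp'
    have hpc : Continuous p :=
      continuous_iff_continuousAt.mpr fun u => (hp' u).continuousAt
    refine ⟨fun u => ∫ t' in t₀..u, Γ u t' (C t' (p t')), by simp [integral_same],
      fun t => ?_, memory_q_deriv D Γ C hC hΓderiv hΓinit hΓcocycle t₀ p hpc⟩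
    rw [← hBpull p hpc t]
    exact hp' t
end

section
/- Let 𝓛 be a Lindblad generator on L(h_sa), P a projection superoperator preserving Tr_{h_a}, Q = I − P, and suppose ρ solves ρ̇ = 𝓛ρ with Qρ(t₀) = 0. Let Γ(t,s) denote the fundamental solution of the linear equation v' = 𝓛^{qq}(t) v on the range of Q. Then p(t) := Pρ(t) satisfies the Nakajima–Zwanzig equation ṗ(t) = 𝓛(t)^{pp} p(t) + ∫_{t₀}^t 𝓛(t)^{pq} Γ(t,t') 𝓛(t')^{qp} p(t') dt'. -/
open intervalIntegral

open Set

theorem linear_ODE_zero {W : Type*} [NormedAddCommGroup W] [NormedSpace ℝ W]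
    {B : ℝ → W →L[ℝ] W} (hB : Continuous B) {y : ℝ → W}
    (hy : ∀ t, HasDerivAt y (B t (y t)) t) {a : ℝ} (h0 : y a = 0) (t : ℝ) : y t = 0 := by
  set lo : ℝ := min a t - 1 with hlo
  set hi : ℝ := max a t + 1 with hhi
  have hmem : a ∈ Ioo lo hi := by
    constructor
    · have := min_le_left a t; linarith
    · have := le_max_left a t; linarith
  have htmem : t ∈ Icc lo hi := by
    constructor
    · have := min_le_right a t; linarith
    · have := le_max_right a t; linarith
  set c : ℝ → ℝ := fun u => max lo (min u hi) with hc
  have hcB : Continuous fun u => B (c u) :=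
    hB.comp (continuous_const.max (continuous_id.min continuous_const))
  have hceq : ∀ u ∈ Ioo lo hi, c u = u := by
    intro u hu
    simp only [hc]
    rw [min_eq_left hu.2.le, max_eq_right hu.1.le]
  obtain ⟨C, hC⟩ : ∃ C, ∀ s : ℝ, ‖B (c s)‖ ≤ C := by
    obtain ⟨C, hC⟩ := (isCompact_Icc (a := lo) (b := hi)).exists_bound_of_continuousOn
      hB.continuousOn
    refine ⟨C, fun s => hC _ ?_⟩
    constructor
    · exact le_max_left _ _
    · have h1 : lo ≤ hi := by
        have := min_le_left a t; have := le_max_left a t; linarith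
      exact max_le (by linarith) (min_le_right _ _)
  have hv : ∀ s : ℝ, LipschitzOnWith (Real.toNNReal C)
      (fun x => B (c s) x) (univ : Set W) := by
    intro s
    refine ((B (c s)).lipschitz.weaken ?_).lipschitzOnWith
    rw [← norm_toNNReal]
    exact Real.toNNReal_le_toNNReal (hC s)
  have key : EqOn y (fun _ => (0 : W)) (Icc lo hi) := by
    refine ODE_solution_unique_of_mem_Icc (v := fun u x => B (c u) x)
      (s := fun _ => (univ : Set W)) (fun s _ => hv s) hmem ?_ ?_ ?_ ?_ ?_ ?_ ?_
    · exact fun s _ => (hy s).continuousAt.continuousWithinAt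
    · intro s hs; show HasDerivAt y (B (c s) (y s)) s; rw [hceq s hs]; exact hy s
    · exact fun s _ => mem_univ _
    · exact continuousOn_const
    · intro s _; simpa using hasDerivAt_const s (0 : W)
    · exact fun s _ => mem_univ _
    · exact h0
  exact key htmem

theorem prop_cocycle {V : Type*} [NormedAddCommGroup V] [NormedSpace ℝ V]
    {A : ℝ → V →L[ℝ] V} (hA : Continuous A) {Γ : ℝ → ℝ → V →L[ℝ] V}
    (hd : ∀ s t, HasDerivAt (fun u => Γ u s) ((A t).comp (Γ t s)) t)
    (h1 : ∀ s, Γ s s = 1) (t s r : ℝ) : (Γ t s).comp (Γ s r) = Γ t r := by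
  set B : ℝ → (V →L[ℝ] V) →L[ℝ] (V →L[ℝ] V) :=
    fun u => ContinuousLinearMap.compL ℝ V V V (A u) with hBdef
  have hB : Continuous B := (ContinuousLinearMap.compL ℝ V V V).continuous.comp hA
  set y : ℝ → V →L[ℝ] V := fun u => (Γ u s).comp (Γ s r) - Γ u r with hydef
  have hy : ∀ u, HasDerivAt y (B u (y u)) u := by
    intro u
    have h2 := ((hd s u).clm_comp (hasDerivAt_const u (Γ s r))).sub (hd r u)
    refine h2.congr_deriv (Eq.symm ?_)
    simp only [hydef, hBdef]
    ext v
    simp [ContinuousLinearMap.comp_apply, map_sub]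
  have h0 : y s = 0 := by
    simp [hydef, h1 s, ContinuousLinearMap.one_def, ContinuousLinearMap.id_comp]
  have := linear_ODE_zero hB hy h0 t
  rw [hydef] at this
  exact sub_eq_zero.mp this

/-- `Q ∘ Γ ∘ Q = Γ ∘ Q` when the generator satisfies `Q ∘ A = A`. -/
theorem prop_QGamma {V : Type*} [NormedAddCommGroup V] [NormedSpace ℝ V]
    {A : ℝ → V →L[ℝ] V} {Q : V →L[ℝ] V}
    (hQA : ∀ u, Q.comp (A u) = A u) (hQQ : Q.comp Q = Q)
    {Γ : ℝ → ℝ → V →L[ℝ] V}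
    (hd : ∀ s t, HasDerivAt (fun u => Γ u s) ((A t).comp (Γ t s)) t)
    (h1 : ∀ s, Γ s s = 1) (t s : ℝ) :
    Q.comp ((Γ t s).comp Q) = (Γ t s).comp Q := by
  set y : ℝ → V →L[ℝ] V := fun u => Q.comp ((Γ u s).comp Q) - (Γ u s).comp Q with hydef
  have hy : ∀ u, HasDerivAt y ((0 : (V →L[ℝ] V) →L[ℝ] (V →L[ℝ] V)) (y u)) u := by
    intro u
    have hΓQ : HasDerivAt (fun w => (Γ w s).comp Q) (((A u).comp (Γ u s)).comp Q) u := by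
      have := (hd s u).clm_comp (hasDerivAt_const u Q)
      simpa using this
    have hQΓQ : HasDerivAt (fun w => Q.comp ((Γ w s).comp Q))
        (Q.comp (((A u).comp (Γ u s)).comp Q)) u := by
      have := (hasDerivAt_const u Q).clm_comp hΓQ
      simpa using this
    have h2 := hQΓQ.sub hΓQ
    refine h2.congr_deriv (Eq.symm ?_)
    rw [← ContinuousLinearMap.comp_assoc, ← ContinuousLinearMap.comp_assoc, hQA u]
    simp
  have h0 : y s = 0 := by
    simp [hydef, h1 s, ContinuousLinearMap.one_def, ContinuousLinearMap.id_comp, hQQ]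
  have := linear_ODE_zero continuous_const hy h0 t
  rw [hydef] at this
  exact sub_eq_zero.mp this

/-- Nakajima–Zwanzig equation: if `ρ' = 𝓛(t)ρ` with `Qρ(t₀) = 0` and `Γ` the fundamental
solution of `v' = 𝓛^{qq}(t) v`, then `p = Pρ` satisfies
`p'(t) = 𝓛(t)^{pp} p(t) + ∫_{t₀}^t 𝓛(t)^{pq} Γ(t,t') 𝓛(t')^{qp} p(t') dt'`. -/
theorem nakajima_zwanzig {V : Type*} [NormedAddCommGroup V] [NormedSpace ℝ V]
    [FiniteDimensional ℝ V]
    (𝓛 : ℝ → V →L[ℝ] V) (h𝓛 : Continuous 𝓛)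
    (P : V →L[ℝ] V) (hP : P.comp P = P)
    (Γ : ℝ → ℝ → V →L[ℝ] V)
    (hΓderiv : ∀ s t, HasDerivAt (fun u => Γ u s)
      ((((1 - P).comp ((𝓛 t).comp (1 - P))).comp (Γ t s))) t)
    (hΓinit : ∀ s, Γ s s = 1)
    (t₀ : ℝ) (ρ : ℝ → V)
    (hρ : ∀ t, HasDerivAt ρ (𝓛 t (ρ t)) t)
    (hq0 : ρ t₀ - P (ρ t₀) = 0) :
    ∀ t, HasDerivAt (fun u => P (ρ u))
      (P (𝓛 t (P (ρ t))) +
        ∫ t' in t₀..t,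
          P (𝓛 t ((1 - P) ((Γ t t') ((1 - P) (𝓛 t' (P (ρ t')))))))) t := by

  set Q : V →L[ℝ] V := 1 - P with hQdef
  have hPapp : ∀ v, P (P v) = P v := fun v => by
    rw [← ContinuousLinearMap.comp_apply, hP]
  have hQQ : Q.comp Q = Q := by
    ext v
    simp [hQdef, hPapp, map_sub]
  set A : ℝ → V →L[ℝ] V := fun u => Q.comp ((𝓛 u).comp Q) with hAdef
  have hA : Continuous A :=
    continuous_const.clm_comp (h𝓛.clm_comp continuous_const)
  have hQA : ∀ u, Q.comp (A u) = A u := fun u => by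
    rw [hAdef, ← ContinuousLinearMap.comp_assoc, hQQ]
  have hd : ∀ s t, HasDerivAt (fun u => Γ u s) ((A t).comp (Γ t s)) t := hΓderiv
  have cocycle := prop_cocycle hA hd hΓinit
  have hQΓ := prop_QGamma hQA hQQ hd hΓinit
  have hunit : ∀ u w, (Γ u w).comp (Γ w u) = 1 := fun u w => by
    rw [cocycle u w u, hΓinit u]
  -- the unit structure
  set U : ℝ → (V →L[ℝ] V)ˣ := fun w =>
    ⟨Γ w t₀, Γ t₀ w,
      by rw [ContinuousLinearMap.mul_def]; exact hunit w t₀,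
      by rw [ContinuousLinearMap.mul_def]; exact hunit t₀ w⟩ with hUdef
  -- derivative of the backward propagator
  have hGinv : ∀ u, HasDerivAt (fun w => Γ t₀ w) (-((Γ t₀ u).comp (A u))) u := by
    intro u
    have hfun : (fun w => Γ t₀ w) = fun w => Ring.inverse ((U w : V →L[ℝ] V)) := by
      funext w
      rw [Ring.inverse_unit (U w)]
      rfl
    rw [hfun]
    have hG : HasDerivAt (fun w => Γ w t₀) ((A u).comp (Γ u t₀)) u := hd t₀ u
    have h2 := (hasFDerivAt_ringInverse (𝕜 := ℝ) (U u)).comp_hasDerivAt u hG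
    refine h2.congr_deriv (Eq.symm ?_)
    have h5 : ((U u)⁻¹ : (V →L[ℝ] V)ˣ).val = Γ t₀ u := rfl
    rw [ContinuousLinearMap.neg_apply, ContinuousLinearMap.mulLeftRight_apply, h5]
    simp only [ContinuousLinearMap.mul_def]
    rw [ContinuousLinearMap.comp_assoc, ContinuousLinearMap.comp_assoc, hunit u t₀,
      ContinuousLinearMap.one_def, ContinuousLinearMap.comp_id]
  have hGinvc : Continuous fun w => Γ t₀ w :=
    continuous_iff_continuousAt.mpr fun w => (hGinv w).continuousAt
  have hρc : Continuous ρ := continuous_iff_continuousAt.mpr fun w => (hρ w).continuousAt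
  set f : ℝ → V := fun u => Q (𝓛 u (P (ρ u))) with hfdef
  have hfc : Continuous f := Q.continuous.comp (h𝓛.clm_apply (P.continuous.comp hρc))
  set q : ℝ → V := fun u => ρ u - P (ρ u) with hqdef
  have hqd : ∀ u, HasDerivAt q (A u (q u) + f u) u := by
    intro u
    have h1 : HasDerivAt q (𝓛 u (ρ u) - P (𝓛 u (ρ u))) u :=
      (hρ u).sub (P.hasFDerivAt.comp_hasDerivAt u (hρ u))
    convert h1 using 1
    simp only [hAdef, hfdef, hqdef, hQdef, ContinuousLinearMap.comp_apply,
      ContinuousLinearMap.sub_apply, ContinuousLinearMap.one_apply, map_sub, hPapp]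
    abel
  set g : ℝ → V := fun r => (Γ t₀ r) (f r) with hgdef
  have hgc : Continuous g := hGinvc.clm_apply hfc
  set y : ℝ → V := fun s => (Γ t₀ s) (q s) - ∫ r in t₀..s, g r with hydef
  have hyd : ∀ s, HasDerivAt y 0 s := by
    intro s
    have h1 := (hGinv s).clm_apply (hqd s)
    have h2 : HasDerivAt (fun w => ∫ r in t₀..w, g r) (g s) s :=
      intervalIntegral.integral_hasDerivAt_right (hgc.intervalIntegrable t₀ s)
        (hgc.stronglyMeasurableAtFilter _ _) hgc.continuousAt
    have h3 := h1.sub h2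
    refine h3.congr_deriv (Eq.symm ?_)
    simp only [hgdef, ContinuousLinearMap.neg_apply, ContinuousLinearMap.comp_apply, map_add]
    abel
  have hy0 : ∀ s, y s = 0 := by
    intro s
    have hz : ∀ u, HasDerivAt (fun w => y w - y t₀)
        ((0 : V →L[ℝ] V) (y u - y t₀)) u := by
      intro u
      simpa using (hyd u).sub_const (y t₀)
    have := linear_ODE_zero continuous_const hz (a := t₀) (by simp) s
    have hyt0 : y t₀ = 0 := by
      simp only [hydef, intervalIntegral.integral_same, hΓinit t₀, hqdef]
      rw [hq0]
      simp
    rw [hyt0, sub_zero] at this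
    exact this
  have hqint : ∀ s, q s = ∫ r in t₀..s, (Γ s r) (f r) := by
    intro s
    have h1 : (Γ t₀ s) (q s) = ∫ r in t₀..s, g r := by
      have := hy0 s
      rw [hydef] at this
      exact sub_eq_zero.mp this
    have h2 : q s = (Γ s t₀) ((Γ t₀ s) (q s)) := by
      rw [← ContinuousLinearMap.comp_apply, hunit s t₀]
      simp
    rw [h2, h1, ← ContinuousLinearMap.intervalIntegral_comp_comm _
      (hgc.intervalIntegrable t₀ s)]
    refine intervalIntegral.integral_congr fun r _ => ?_
    rw [hgdef]
    simp only [← ContinuousLinearMap.comp_apply, cocycle s t₀ r]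
  intro t
  have hbase : HasDerivAt (fun u => P (ρ u)) (P (𝓛 t (ρ t))) t :=
    P.hasFDerivAt.comp_hasDerivAt t (hρ t)
  convert hbase using 1
  have hΓf : (fun r => (Γ t r) (f r)) = fun r => (Γ t t₀) (g r) := by
    funext r
    rw [hgdef]
    conv_rhs => rw [← ContinuousLinearMap.comp_apply, cocycle t t₀ r]
  have hΓfc : Continuous fun r => (Γ t r) (f r) := by
    rw [hΓf]; exact (Γ t t₀).continuous.comp hgc
  have hρeq : ρ t = P (ρ t) + q t := by simp [hqdef]
  have hsplit : P (𝓛 t (ρ t)) = P (𝓛 t (P (ρ t))) + P (𝓛 t (q t)) := by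
    rw [← map_add, ← map_add, ← hρeq]
  rw [hsplit]
  congr 1
  have hPL : P (𝓛 t (q t)) = ∫ r in t₀..t, (P.comp (𝓛 t)) ((Γ t r) (f r)) := by
    rw [hqint t,
      show P (𝓛 t (∫ r in t₀..t, (Γ t r) (f r)))
          = (P.comp (𝓛 t)) (∫ r in t₀..t, (Γ t r) (f r)) from rfl,
      ← ContinuousLinearMap.intervalIntegral_comp_comm _
        (hΓfc.intervalIntegrable t₀ t)]
  rw [hPL]
  refine intervalIntegral.integral_congr fun r _ => ?_
  have hQapp : (1 - P) ((Γ t r) ((1 - P) (𝓛 r (P (ρ r))))) = (Γ t r) ((1 - P) (𝓛 r (P (ρ r)))) := by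
    have h := congrArg (fun (L : V →L[ℝ] V) => L (𝓛 r (P (ρ r)))) (hQΓ t r)
    simp only [ContinuousLinearMap.comp_apply] at h
    exact h
  rw [hQapp]
  simp [hfdef, hQdef, ContinuousLinearMap.comp_apply]
end
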